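/- arXiv:0709.1788 — 3 statements merged into one kernel-verified Lean document; each statement's English description precedes it below -/
import Mathlib

section
/- The q-logarithm satisfies the q-difference equation S_q(x/q) - S_q(x) = 1 - (x;q)_∞ for all x ∈ ℂ, where 0 < q < 1. -/
noncomputable def qPoch (q x : ℂ) (k : ℕ) : ℂ := ∏ j ∈ Finset.range k, (1 - x * q ^ j)

noncomputable def Sq (q : ℝ) (x : ℂ) : ℂ :=
  -∑' k : ℕ, ((q : ℂ) ^ (k + 1) / (1 - (q : ℂ) ^ (k + 1))) * qPoch q x (k + 1)

/-- Norm bound on the finite q-Pochhammer symbols, uniform in `k`. -/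
lemma qPoch_norm_le (q : ℝ) (hq0 : 0 < q) (hq1 : q < 1) (x : ℂ) (k : ℕ) :
    ‖qPoch q x k‖ ≤ Real.exp (‖x‖ * (1 - q)⁻¹) := by
  have hqc : ‖(q : ℂ)‖ = q := by
    rw [Complex.norm_real, Real.norm_eq_abs, abs_of_pos hq0]
  rw [qPoch]
  calc ‖∏ j ∈ Finset.range k, (1 - x * (q : ℂ) ^ j)‖
      ≤ ∏ j ∈ Finset.range k, ‖(1 - x * (q : ℂ) ^ j)‖ :=
        Finset.norm_prod_le _ _
    _ ≤ ∏ j ∈ Finset.range k, Real.exp (‖x‖ * q ^ j) := by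
        apply Finset.prod_le_prod
        · intro j _; positivity
        · intro j _
          calc ‖(1 - x * (q : ℂ) ^ j)‖ ≤ ‖(1 : ℂ)‖ + ‖x * (q : ℂ) ^ j‖ := norm_sub_le _ _
            _ = 1 + ‖x‖ * q ^ j := by
                rw [norm_one, norm_mul, norm_pow, hqc]
            _ ≤ Real.exp (‖x‖ * q ^ j) := by
                linarith [Real.add_one_le_exp (‖x‖ * q ^ j)]
    _ = Real.exp (∑ j ∈ Finset.range k, ‖x‖ * q ^ j) := by rw [Real.exp_sum]
    _ ≤ Real.exp (‖x‖ * (1 - q)⁻¹) := by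
        apply Real.exp_le_exp.mpr
        rw [← Finset.mul_sum]
        apply mul_le_mul_of_nonneg_left _ (norm_nonneg x)
        have hsum : ∑' j : ℕ, q ^ j = (1 - q)⁻¹ :=
          tsum_geometric_of_lt_one hq0.le hq1
        rw [← hsum]
        exact Summable.sum_le_tsum _ (fun j _ => by positivity)
          (summable_geometric_of_lt_one hq0.le hq1)

/-- Summability of the terms of `Sq`. -/
lemma Sq_summable (q : ℝ) (hq0 : 0 < q) (hq1 : q < 1) (x : ℂ) :
    Summable fun k : ℕ =>
      ((q : ℂ) ^ (k + 1) / (1 - (q : ℂ) ^ (k + 1))) * qPoch q x (k + 1) := by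
  have hqc : ‖(q : ℂ)‖ = q := by
    rw [Complex.norm_real, Real.norm_eq_abs, abs_of_pos hq0]
  set C := Real.exp (‖x‖ * (1 - q)⁻¹) with hC
  apply Summable.of_norm_bounded (g := fun k : ℕ => (q ^ (k + 1) / (1 - q)) * C)
  · apply Summable.mul_right
    apply Summable.div_const
    exact (summable_geometric_of_lt_one hq0.le hq1).comp_injective Nat.succ_injective
  · intro k
    rw [norm_mul, norm_div]
    have h1 : ‖(1 : ℂ) - (q : ℂ) ^ (k + 1)‖ ≥ 1 - q := by
      have : ‖(1 : ℂ)‖ - ‖(q : ℂ) ^ (k + 1)‖ ≤ ‖(1 : ℂ) - (q : ℂ) ^ (k + 1)‖ :=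
        norm_sub_norm_le _ _
      rw [norm_one, norm_pow, hqc] at this
      have hpow : q ^ (k + 1) ≤ q := by
        calc q ^ (k + 1) ≤ q ^ 1 := pow_le_pow_of_le_one hq0.le hq1.le (by omega)
          _ = q := pow_one q
      linarith
    have h1q : (0:ℝ) < 1 - q := by linarith
    have hnum : ‖(q : ℂ) ^ (k + 1)‖ = q ^ (k + 1) := by rw [norm_pow, hqc]
    apply mul_le_mul
    · rw [hnum]
      apply div_le_div_of_nonneg_left (by positivity) h1q
      linarith
    · exact qPoch_norm_le q hq0 hq1 x (k + 1)
    · exact norm_nonneg _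
    · positivity

theorem qlog_qdifference_equation (q : ℝ) (hq0 : 0 < q) (hq1 : q < 1) (x : ℂ) :
    Sq q (x / (q : ℂ)) - Sq q x = 1 - ∏' j : ℕ, (1 - x * (q : ℂ) ^ j) := by
  have hqc : ‖(q : ℂ)‖ = q := by
    rw [Complex.norm_real, Real.norm_eq_abs, abs_of_pos hq0]
  have hQ0 : (q : ℂ) ≠ 0 := by
    simp only [ne_eq, Complex.ofReal_eq_zero]; exact hq0.ne'
  have hQpow : ∀ k : ℕ, (1 : ℂ) - (q : ℂ) ^ (k + 1) ≠ 0 := by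
    intro k
    have : ‖(q : ℂ) ^ (k + 1)‖ < 1 := by
      rw [norm_pow, hqc]
      calc q ^ (k + 1) ≤ q := by
            calc q ^ (k + 1) ≤ q ^ 1 := pow_le_pow_of_le_one hq0.le hq1.le (by omega)
              _ = q := pow_one q
        _ < 1 := hq1
    intro h
    rw [sub_eq_zero] at h
    rw [← h, norm_one] at this
    exact lt_irrefl 1 this
  -- abbreviations
  set A : ℕ → ℂ := fun k =>
    ((q : ℂ) ^ (k + 1) / (1 - (q : ℂ) ^ (k + 1))) * qPoch q x (k + 1) with hA
  set B : ℕ → ℂ := fun k =>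
    ((q : ℂ) ^ (k + 1) / (1 - (q : ℂ) ^ (k + 1))) * qPoch q (x / (q : ℂ)) (k + 1) with hB
  have hSA : Summable A := Sq_summable q hq0 hq1 x
  have hSB : Summable B := Sq_summable q hq0 hq1 (x / (q : ℂ))
  -- the key termwise identity
  have hkey : ∀ k : ℕ, A k - B k = qPoch q x k - qPoch q x (k + 1) := by
    intro k
    have hsucc : qPoch q x (k + 1) = qPoch q x k * (1 - x * (q : ℂ) ^ k) := by
      unfold qPoch; exact Finset.prod_range_succ _ _
    have hshift : qPoch q (x / (q : ℂ)) (k + 1) = (1 - x / (q : ℂ)) * qPoch q x k := by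
      rw [qPoch, Finset.prod_range_succ']
      simp only [pow_zero, mul_one]
      rw [mul_comm]
      congr 1
      rw [qPoch]
      apply Finset.prod_congr rfl
      intro j _
      congr 1
      rw [div_mul_eq_mul_div, pow_succ]
      field_simp
    show (q : ℂ) ^ (k + 1) / (1 - (q : ℂ) ^ (k + 1)) * qPoch q x (k + 1) -
      (q : ℂ) ^ (k + 1) / (1 - (q : ℂ) ^ (k + 1)) * qPoch q (x / (q : ℂ)) (k + 1) =
      qPoch q x k - qPoch q x (k + 1)
    rw [hshift, hsucc]
    have h1 := hQpow k
    field_simp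
    ring
  -- telescoping sum
  have hsub : Summable (fun k => A k - B k) := hSA.sub hSB
  have hLHS : Sq q (x / (q : ℂ)) - Sq q x = ∑' k, (A k - B k) := by
    show -(∑' k, B k) - -(∑' k, A k) = ∑' k, (A k - B k)
    rw [Summable.tsum_sub hSA hSB]
    ring
  -- partial sums of the telescoping series
  have htel : ∀ n : ℕ, ∑ k ∈ Finset.range n, (A k - B k) = 1 - qPoch q x n := by
    intro n
    calc ∑ k ∈ Finset.range n, (A k - B k)
        = ∑ k ∈ Finset.range n, (qPoch q x k - qPoch q x (k + 1)) :=
          Finset.sum_congr rfl (fun k _ => hkey k)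
      _ = qPoch q x 0 - qPoch q x n := Finset.sum_range_sub' _ _
      _ = 1 - qPoch q x n := by rw [qPoch, Finset.prod_range_zero]
  -- limit of the partial products
  have hlim : Filter.Tendsto (fun n => qPoch q x n) Filter.atTop
      (nhds (1 - ∑' k, (A k - B k))) := by
    have h1 := hsub.hasSum.tendsto_sum_nat
    have h2 : Filter.Tendsto (fun n => 1 - ∑ k ∈ Finset.range n, (A k - B k))
        Filter.atTop (nhds (1 - ∑' k, (A k - B k))) :=
      Filter.Tendsto.const_sub 1 h1
    apply h2.congr
    intro n
    rw [htel n]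
    ring
  -- identify the infinite product
  have hprod : ∏' j : ℕ, (1 - x * (q : ℂ) ^ j) = 1 - ∑' k, (A k - B k) := by
    by_cases hz : ∃ j : ℕ, 1 - x * (q : ℂ) ^ j = 0
    · obtain ⟨j0, hj0⟩ := hz
      have hp0 : HasProd (fun j : ℕ => 1 - x * (q : ℂ) ^ j) 0 := by
        rw [HasProd]
        apply Filter.Tendsto.congr' _ tendsto_const_nhds
        filter_upwards [Filter.eventually_ge_atTop ({j0} : Finset ℕ)] with s hs
        exact (Finset.prod_eq_zero (hs (Finset.mem_singleton_self j0)) hj0).symm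
      have hlim0 : Filter.Tendsto (fun n => qPoch q x n) Filter.atTop (nhds (0 : ℂ)) := by
        apply Filter.Tendsto.congr' _ tendsto_const_nhds
        filter_upwards [Filter.eventually_ge_atTop (j0 + 1)] with n hn
        exact (Finset.prod_eq_zero (Finset.mem_range.mpr (by omega)) hj0).symm
      have h0 : (0 : ℂ) = 1 - ∑' k, (A k - B k) := tendsto_nhds_unique hlim0 hlim
      rw [hp0.tprod_eq, h0]
    · push_neg at hz
      have hlog : Summable fun n : ℕ => Complex.log (1 - x * (q : ℂ) ^ n) := by
        apply Summable.of_norm_bounded_eventually_nat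
          (g := fun n => (3 / 2) * (‖x‖ * q ^ n))
        · exact ((summable_geometric_of_lt_one hq0.le hq1).mul_left ‖x‖).mul_left _
        · have hten : Filter.Tendsto (fun n : ℕ => ‖x‖ * q ^ n) Filter.atTop (nhds 0) := by
            simpa using (tendsto_pow_atTop_nhds_zero_of_lt_one hq0.le hq1).const_mul ‖x‖
          filter_upwards [hten.eventually_le_const (by norm_num : (0:ℝ) < 1/2)] with n hn
          have hxn : ‖-(x * (q : ℂ) ^ n)‖ ≤ 1 / 2 := by
            rw [norm_neg, norm_mul, norm_pow, hqc]; exact hn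
          have := Complex.norm_log_one_add_half_le_self hxn
          rw [show (1 : ℂ) + -(x * (q : ℂ) ^ n) = 1 - x * (q : ℂ) ^ n by ring] at this
          rw [norm_neg, norm_mul, norm_pow, hqc] at this
          exact this
      have hmul : Multipliable fun j : ℕ => 1 - x * (q : ℂ) ^ j := by
        have := Complex.multipliable_of_summable_log hlog
        exact this
      have hten := hmul.hasProd.tendsto_prod_nat
      exact tendsto_nhds_unique hten hlim
  rw [hLHS, hprod]
  ring
end

section
/- For every positive integer n, S_q(q^{-n}) = n (and S_q(1) = 0), where 0 < q < 1. -/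
lemma qPoch_succ (q x : ℂ) (m : ℕ) : qPoch q x (m + 1) = qPoch q x m * (1 - x * q ^ m) :=
  Finset.prod_range_succ _ m

lemma qPoch_one_arg (q : ℂ) (k : ℕ) : qPoch q 1 (k + 1) = 0 := by
  apply Finset.prod_eq_zero (Finset.mem_range.2 (Nat.succ_pos k))
  simp

lemma qPoch_shift (q x : ℂ) (m : ℕ) : qPoch q x (m + 1) = (1 - x) * qPoch q (q * x) m := by
  rw [qPoch, Finset.prod_range_succ']
  simp only [pow_zero, mul_one, qPoch]
  rw [mul_comm]
  congr 1
  apply Finset.prod_congr rfl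
  intro j _
  ring_nf

lemma qPoch_neg_pow_zero (q : ℂ) (hq : q ≠ 0) (n m : ℕ) (h : n < m) :
    qPoch q (q ^ (-(n : ℤ))) m = 0 := by
  apply Finset.prod_eq_zero (Finset.mem_range.2 h)
  have : q ^ (-(n : ℤ)) * q ^ n = 1 := by
    rw [← zpow_natCast q n, ← zpow_add₀ hq]
    simp
  rw [this]; ring

lemma telescope (q x : ℂ) (hx : x ≠ 0) (n : ℕ) (h0 : qPoch q x (n + 1) = 0) :
    ∑ k ∈ Finset.range n, q ^ (k + 1) * qPoch q x (k + 1) = (1 - x) / x := by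
  have key : ∀ k, q ^ (k + 1) * qPoch q x (k + 1)
      = qPoch q x (k + 1) / x - qPoch q x (k + 2) / x := by
    intro k
    rw [qPoch_succ q x (k + 1)]
    field_simp
    ring
  rw [Finset.sum_congr rfl (fun k _ => key k),
    Finset.sum_range_sub' (fun k => qPoch q x (k + 1) / x)]
  rw [h0]
  simp [qPoch]

lemma mainF (q : ℝ) (hq0 : 0 < q) (hq1 : q < 1) : ∀ n : ℕ,
    ∑ k ∈ Finset.range n,
      ((q : ℂ) ^ (k + 1) / (1 - (q : ℂ) ^ (k + 1))) * qPoch q ((q : ℂ) ^ (-(n : ℤ))) (k + 1)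
      = -(n : ℂ) := by
  have hQ0 : (q : ℂ) ≠ 0 := Complex.ofReal_ne_zero.2 (ne_of_gt hq0)
  have hofr : ∀ z : ℤ, ((q ^ z : ℝ) : ℂ) = (q : ℂ) ^ z := fun z => Complex.ofReal_zpow q z
  have hpow : ∀ m : ℕ, (1 : ℂ) - (q : ℂ) ^ (m + 1) ≠ 0 := by
    intro m hc
    have h : q ^ (m + 1) < 1 := pow_lt_one₀ (le_of_lt hq0) hq1 (Nat.succ_ne_zero m)
    have h1 : (q : ℂ) ^ (m + 1) = 1 := by linear_combination -hc
    rw [← Complex.ofReal_pow] at h1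
    have := Complex.ofReal_injective (h1.trans Complex.ofReal_one.symm)
    linarith
  have hzpow : ∀ n : ℕ, 1 ≤ n → (1 : ℂ) - (q : ℂ) ^ (-(n : ℤ)) ≠ 0 := by
    intro n hn hc
    have h1 : (q : ℂ) ^ (-(n : ℤ)) = 1 := by linear_combination -hc
    rw [← hofr] at h1
    have h3 : q ^ (-(n : ℤ)) = 1 := Complex.ofReal_injective (h1.trans Complex.ofReal_one.symm)
    have hlt : q ^ n < 1 := pow_lt_one₀ (le_of_lt hq0) hq1 (by omega)
    have hp : (0:ℝ) < q ^ n := pow_pos hq0 n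
    rw [zpow_neg, zpow_natCast, inv_eq_one] at h3
    linarith
  intro n
  induction n with
  | zero => simp
  | succ n ih =>
    set x : ℂ := (q : ℂ) ^ (-((n + 1 : ℕ) : ℤ)) with hxdef
    have hx0 : x ≠ 0 := zpow_ne_zero _ hQ0
    have hx1 : (1 : ℂ) - x ≠ 0 := hzpow (n + 1) (by omega)
    have hmul : (q : ℂ) * x = (q : ℂ) ^ (-(n : ℤ)) := by
      rw [hxdef]
      rw [show (q : ℂ) * (q:ℂ) ^ (-((n + 1 : ℕ) : ℤ)) = (q:ℂ) ^ (1 + -((n + 1 : ℕ) : ℤ)) by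
        rw [zpow_add₀ hQ0]; simp]
      congr 1
      push_cast
      ring
    -- extend IH to range (n+1)
    have ih' : ∑ k ∈ Finset.range (n + 1),
        ((q : ℂ) ^ (k + 1) / (1 - (q : ℂ) ^ (k + 1))) * qPoch q ((q : ℂ) * x) (k + 1)
        = -(n : ℂ) := by
      rw [Finset.sum_range_succ, hmul, ih, qPoch_neg_pow_zero _ hQ0 n (n+1) (by omega)]
      ring
    have htel : ∑ k ∈ Finset.range (n + 1), (q : ℂ) ^ (k + 1) * qPoch q x (k + 1)
        = (1 - x) / x :=
      telescope _ x hx0 (n + 1) (qPoch_neg_pow_zero _ hQ0 (n+1) (n+2) (by omega))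
    have step : ∀ k ∈ Finset.range (n + 1),
        ((q : ℂ) ^ (k + 1) / (1 - (q : ℂ) ^ (k + 1))) * qPoch q x (k + 1)
        = ((q : ℂ) ^ (k + 1) / (1 - (q : ℂ) ^ (k + 1))) * qPoch q ((q : ℂ) * x) (k + 1)
          + (-(x / (1 - x))) * ((q : ℂ) ^ (k + 1) * qPoch q x (k + 1)) := by
      intro k _
      have h1 : (1 - x) * qPoch q ((q : ℂ) * x) (k + 1) = qPoch q x (k + 1) * (1 - x * (q:ℂ) ^ (k + 1)) := by
        rw [← qPoch_shift, qPoch_succ]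
      have h2 := hpow k
      have hP' : qPoch q ((q : ℂ) * x) (k + 1)
          = qPoch q x (k + 1) * (1 - x * (q:ℂ) ^ (k + 1)) / (1 - x) := by
        rw [eq_div_iff hx1]; linear_combination h1
      rw [hP']
      field_simp
      ring
    calc ∑ k ∈ Finset.range (n + 1),
          ((q : ℂ) ^ (k + 1) / (1 - (q : ℂ) ^ (k + 1))) * qPoch q x (k + 1)
        = ∑ k ∈ Finset.range (n + 1),
          (((q : ℂ) ^ (k + 1) / (1 - (q : ℂ) ^ (k + 1))) * qPoch q ((q : ℂ) * x) (k + 1)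
          + (-(x / (1 - x))) * ((q : ℂ) ^ (k + 1) * qPoch q x (k + 1))) :=
          Finset.sum_congr rfl step
      _ = -(n : ℂ) + (-(x / (1 - x))) * ((1 - x) / x) := by
          rw [Finset.sum_add_distrib, ih', ← Finset.mul_sum, htel]
      _ = -((n + 1 : ℕ) : ℂ) := by
          field_simp
          push_cast
          ring

theorem qlog_value_at_negative_powers (q : ℝ) (hq0 : 0 < q) (hq1 : q < 1) :
    Sq q 1 = 0 ∧ ∀ n : ℕ, 1 ≤ n → Sq q ((q : ℂ) ^ (-(n : ℤ))) = n := by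
  have hQ0 : (q : ℂ) ≠ 0 := Complex.ofReal_ne_zero.2 (ne_of_gt hq0)
  constructor
  · simp [Sq, qPoch_one_arg]
  · intro n hn
    rw [Sq, tsum_eq_sum (s := Finset.range n) (by
      intro k hk
      rw [qPoch_neg_pow_zero _ hQ0 n (k+1) (by simp at hk; omega)]
      ring)]
    rw [mainF q hq0 hq1 n]
    ring
end

section
/- For 0 < q < 1: ∑_{k=1}^∞ q^k/(1-q^k) = ∑_{k=1}^∞ (-1)^{k-1} q^{k(k+1)/2}/((1-q^k)(q;q)_k), i.e., the q-harmonic series ζ_q(1) has this alternating series representation. -/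
open Filter Finset
noncomputable def qB (q : ℝ) : ℕ → ℕ → ℝ
  | _, 0 => 1
  | 0, _+1 => 0
  | n+1, j+1 => qB q n (j+1) + q^(n-j) * qB q n j
lemma qB_zero (q : ℝ) (n : ℕ) : qB q n 0 = 1 := by cases n <;> rfl
lemma qB_succ (q : ℝ) (n j : ℕ) :
    qB q (n+1) (j+1) = qB q n (j+1) + q^(n-j) * qB q n j := rfl
lemma qB_eq_zero (q : ℝ) : ∀ n j, n < j → qB q n j = 0 := by
  intro n
  induction n with
  | zero => intro j hj; cases j with
    | zero => omega
    | succ j => rfl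
  | succ n ih =>
    intro j hj
    cases j with
    | zero => omega
    | succ j =>
      rw [qB_succ, ih _ (by omega), ih _ (by omega)]
      ring
noncomputable def Pq (q : ℝ) (k : ℕ) : ℝ := ∏ i ∈ Finset.range k, (1 - q^(i+1))
lemma Pq_succ (q : ℝ) (k : ℕ) : Pq q (k+1) = Pq q k * (1 - q^(k+1)) :=
  Finset.prod_range_succ _ _
lemma Pq_pos (q : ℝ) (hq0 : 0 < q) (hq1 : q < 1) (k : ℕ) : 0 < Pq q k := by
  apply Finset.prod_pos
  intro i _
  have : q^(i+1) < 1 := pow_lt_one₀ hq0.le hq1 (Nat.succ_ne_zero i)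
  linarith
lemma one_sub_pow_pos (q : ℝ) (hq0 : 0 < q) (hq1 : q < 1) (k : ℕ) : 0 < 1 - q^(k+1) := by
  have : q^(k+1) < 1 := pow_lt_one₀ hq0.le hq1 (Nat.succ_ne_zero k)
  linarith
lemma Tsucc (j : ℕ) : (j+1)*(j+2)/2 = j*(j+1)/2 + (j+1) := by
  have h : (j+1)*(j+2) = j*(j+1) + (j+1)*2 := by ring
  rw [h, Nat.add_mul_div_right _ _ (by norm_num : (0:ℕ) < 2)]

lemma G_id (q : ℝ) (hq0 : 0 < q) (hq1 : q < 1) :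
    ∀ n m, ∑ j ∈ range (n+1), (-1:ℝ)^j * q^(j*(j+1)/2) * qB q n j / (1 - q^(j+m+1))
      = Pq q m * Pq q n / Pq q (n+m+1) := by
  intro n
  induction n with
  | zero =>
    intro m
    have h1 := Pq_pos q hq0 hq1 m
    have h2 := one_sub_pow_pos q hq0 hq1 m
    simp only [Finset.sum_range_one, pow_zero, Nat.zero_div, qB_zero, mul_one, one_mul,
      Pq, Finset.prod_range_zero, Nat.zero_add, zero_add]
    rw [Finset.prod_range_succ, ← Pq]
    field_simp
  | succ n ih =>
    intro m
    rw [Finset.sum_range_succ']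
    have hsplit : ∀ j ∈ range (n+1),
        (-1:ℝ)^(j+1) * q^((j+1)*((j+1)+1)/2) * qB q (n+1) (j+1) / (1 - q^((j+1)+m+1))
        = (-1:ℝ)^(j+1) * q^((j+1)*((j+1)+1)/2) * qB q n (j+1) / (1 - q^((j+1)+m+1))
          + (-q^(n+1)) * ((-1:ℝ)^j * q^(j*(j+1)/2) * qB q n j / (1 - q^(j+(m+1)+1))) := by
      intro j hj
      have hjn : j ≤ n := Nat.lt_succ_iff.mp (Finset.mem_range.mp hj)
      have hexp : q^((j+1)*((j+1)+1)/2) * q^(n-j) = q^(j*(j+1)/2) * q^(n+1) := by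
        rw [← pow_add, ← pow_add]
        congr 1
        have e : (j+1)*((j+1)+1)/2 = j*(j+1)/2 + (j+1) := by
          rw [show (j+1)+1 = j+2 by omega]; exact Tsucc j
        rw [e]; omega
      have hden : (j+1)+m+1 = j+(m+1)+1 := by omega
      rw [qB_succ, hden, ← mul_div_assoc, ← add_div]
      congr 1
      linear_combination ((-1:ℝ)^(j+1) * qB q n j) * hexp
    rw [Finset.sum_congr rfl hsplit, Finset.sum_add_distrib]
    have hA : (∑ j ∈ range (n+1),
          (-1:ℝ)^(j+1) * q^((j+1)*((j+1)+1)/2) * qB q n (j+1) / (1 - q^((j+1)+m+1)))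
        + (-1:ℝ)^0 * q^(0*(0+1)/2) * qB q (n+1) 0 / (1 - q^(0+m+1))
        = Pq q m * Pq q n / Pq q (n+m+1) := by
      rw [← ih m]
      have h0 : (-1:ℝ)^0 * q^(0*(0+1)/2) * qB q (n+1) 0 / (1 - q^(0+m+1))
          = (-1:ℝ)^0 * q^(0*(0+1)/2) * qB q n 0 / (1 - q^(0+m+1)) := by
        rw [qB_zero, qB_zero]
      rw [h0, ← Finset.sum_range_succ'
        (fun j => (-1:ℝ)^j * q^(j*(j+1)/2) * qB q n j / (1 - q^(j+m+1))) (n+1)]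
      rw [Finset.sum_range_succ, qB_eq_zero q n (n+1) (by omega)]
      simp
    have hB : (∑ j ∈ range (n+1),
          (-q^(n+1)) * ((-1:ℝ)^j * q^(j*(j+1)/2) * qB q n j / (1 - q^(j+(m+1)+1))))
        = (-q^(n+1)) * (Pq q (m+1) * Pq q n / Pq q (n+(m+1)+1)) := by
      rw [← Finset.mul_sum, ih (m+1)]
    rw [add_right_comm, hA, hB]
    have e1 : n+(m+1)+1 = (n+m+1)+1 := by omega
    have e2 : (n+1)+m+1 = (n+m+1)+1 := by omega
    rw [e1, e2, Pq_succ q (n+m+1), Pq_succ q m, Pq_succ q n]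
    have hP1 := (Pq_pos q hq0 hq1 m).ne'
    have hP2 := (Pq_pos q hq0 hq1 n).ne'
    have hP3 := (Pq_pos q hq0 hq1 (n+m+1)).ne'
    have hs1 := (one_sub_pow_pos q hq0 hq1 m).ne'
    have hs2 := (one_sub_pow_pos q hq0 hq1 n).ne'
    have hs3 := (one_sub_pow_pos q hq0 hq1 (n+m+1)).ne'
    have hpow : q^(n+1) * q^(m+1) = q^((n+m+1)+1) := by
      rw [← pow_add, show (n+1)+(m+1) = (n+m+1)+1 from by omega]
    field_simp
    linear_combination (Pq q m * Pq q n * Pq q (n+m+1) * (1-q^((n+m+1)+1))) * hpow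

lemma vanHamme (q : ℝ) (hq0 : 0 < q) (hq1 : q < 1) :
    ∀ n, ∑ k ∈ range n, q^(k+1)/(1-q^(k+1))
      = ∑ k ∈ range n, (-1:ℝ)^k * q^((k+1)*((k+1)+1)/2) * qB q n (k+1) / (1 - q^(k+1)) := by
  intro n
  induction n with
  | zero => simp
  | succ n ih =>
    have hsplit : ∀ k ∈ range (n+1),
        (-1:ℝ)^k * q^((k+1)*((k+1)+1)/2) * qB q (n+1) (k+1) / (1 - q^(k+1))
        = (-1:ℝ)^k * q^((k+1)*((k+1)+1)/2) * qB q n (k+1) / (1 - q^(k+1))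
          + q^(n+1) * ((-1:ℝ)^k * q^(k*(k+1)/2) * qB q n k / (1 - q^(k+0+1))) := by
      intro k hk
      have hkn : k ≤ n := Nat.lt_succ_iff.mp (Finset.mem_range.mp hk)
      have hexp : q^((k+1)*((k+1)+1)/2) * q^(n-k) = q^(k*(k+1)/2) * q^(n+1) := by
        rw [← pow_add, ← pow_add]
        congr 1
        have e : (k+1)*((k+1)+1)/2 = k*(k+1)/2 + (k+1) := by
          rw [show (k+1)+1 = k+2 by omega]; exact Tsucc k
        rw [e]; omega
      have hden : k+0+1 = k+1 := by omega
      rw [qB_succ, hden, ← mul_div_assoc, ← add_div]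
      congr 1
      linear_combination ((-1:ℝ)^k * qB q n k) * hexp
    rw [Finset.sum_congr rfl hsplit, Finset.sum_add_distrib]
    have hA : ∑ k ∈ range (n+1),
          (-1:ℝ)^k * q^((k+1)*((k+1)+1)/2) * qB q n (k+1) / (1 - q^(k+1))
        = ∑ k ∈ range n, q^(k+1)/(1-q^(k+1)) := by
      rw [Finset.sum_range_succ, qB_eq_zero q n (n+1) (by omega), ih]
      simp
    have hB : ∑ k ∈ range (n+1),
          q^(n+1) * ((-1:ℝ)^k * q^(k*(k+1)/2) * qB q n k / (1 - q^(k+0+1)))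
        = q^(n+1)/(1-q^(n+1)) := by
      rw [← Finset.mul_sum, G_id q hq0 hq1 n 0]
      have e : n+0+1 = n+1 := by omega
      rw [e, Pq_succ]
      have hP2 := (Pq_pos q hq0 hq1 n).ne'
      have hs2 := (one_sub_pow_pos q hq0 hq1 n).ne'
      simp only [Pq, Finset.prod_range_zero, one_mul]
      rw [← Pq]
      field_simp
    rw [hA, hB, Finset.sum_range_succ]

lemma qB_form (q : ℝ) : ∀ n j, qB q n j * Pq q j
    = ∏ i ∈ Finset.range j, (1 - q^(n-i)) := by
  intro n
  induction n with
  | zero =>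
    intro j
    cases j with
    | zero => simp [qB_zero, Pq]
    | succ j =>
      rw [qB_eq_zero q 0 (j+1) (by omega), zero_mul]
      exact (Finset.prod_eq_zero (Finset.mem_range.2 (Nat.succ_pos j)) (by simp)).symm
  | succ n ih =>
    intro j
    cases j with
    | zero => simp [qB_zero, Pq]
    | succ j =>
      have key : ∏ i ∈ Finset.range (j+1), (1 - q^(n+1-i))
          = (1 - q^(n+1)) * ∏ i ∈ Finset.range j, (1 - q^(n-i)) := by
        rw [Finset.prod_range_succ']
        simp only [Nat.succ_sub_succ_eq_sub, Nat.sub_zero]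
        ring
      rw [qB_succ, key]
      have h1 := ih (j+1)
      have h2 := ih j
      rw [Pq_succ] at h1
      rw [Finset.prod_range_succ] at h1
      rw [Pq_succ]
      rcases le_or_gt j n with hjn | hjn
      · have hq : q^(n-j) * q^(j+1) = q^(n+1) := by
          rw [← pow_add]; congr 1; omega
        linear_combination h1 + q^(n-j)*(1-q^(j+1))*h2
          - (∏ i ∈ Finset.range j, (1 - q^(n-i)))*hq
      · have hz : ∏ i ∈ Finset.range j, (1 - q^(n-i)) = 0 :=
          Finset.prod_eq_zero (Finset.mem_range.2 hjn) (by simp)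
        rw [hz] at h1 h2
        rw [hz]
        linear_combination h1 + q^(n-j)*(1-q^(j+1))*h2

lemma qB_nonneg_le (q : ℝ) (hq0 : 0 < q) (hq1 : q < 1) (n j : ℕ) :
    0 ≤ qB q n j ∧ qB q n j ≤ (Pq q j)⁻¹ := by
  have hP := Pq_pos q hq0 hq1 j
  have hform : qB q n j * Pq q j = ∏ i ∈ Finset.range j, (1 - q^(n-i)) := qB_form q n j
  have hN0 : 0 ≤ ∏ i ∈ Finset.range j, (1 - q^(n-i)) := by
    apply Finset.prod_nonneg
    intro i _
    have : q^(n-i) ≤ 1 := pow_le_one₀ hq0.le hq1.le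
    linarith
  have hN1 : (∏ i ∈ Finset.range j, (1 - q^(n-i))) ≤ 1 := by
    apply Finset.prod_le_one
    · intro i _
      have : q^(n-i) ≤ 1 := pow_le_one₀ hq0.le hq1.le
      linarith
    · intro i _
      have : 0 < q^(n-i) := pow_pos hq0 _
      linarith
  constructor
  · nlinarith [hform ▸ hN0]
  · rw [inv_eq_one_div, le_div_iff₀ hP]
    linarith [hform ▸ hN1]

lemma qB_tendsto (q : ℝ) (hq0 : 0 < q) (hq1 : q < 1) (j : ℕ) :
    Filter.Tendsto (fun n => qB q n j) Filter.atTop (nhds ((Pq q j)⁻¹)) := by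
  have hP := (Pq_pos q hq0 hq1 j).ne'
  have hfe : (fun n => qB q n j)
      = fun n => (∏ i ∈ Finset.range j, (1 - q^(n-i))) / Pq q j := by
    funext n
    rw [eq_div_iff hP]
    exact qB_form q n j
  rw [hfe]
  have hprod : Filter.Tendsto (fun n => ∏ i ∈ Finset.range j, (1 - q^(n-i)))
      Filter.atTop (nhds (∏ i ∈ Finset.range j, (1:ℝ))) := by
    apply tendsto_finset_prod
    intro i _
    have h0 : Filter.Tendsto (fun n : ℕ => q^(n-i)) Filter.atTop (nhds 0) :=
      (tendsto_pow_atTop_nhds_zero_of_lt_one hq0.le hq1).comp (tendsto_sub_atTop_nat i)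
    simpa using tendsto_const_nhds.sub h0
  simp only [Finset.prod_const_one] at hprod
  simpa [one_div] using hprod.div_const (Pq q j)

lemma factor_lb (q : ℝ) (hq0 : 0 < q) (hq1 : q < 1) (x : ℝ) (hx0 : 0 < x) (hxq : x ≤ q) :
    Real.exp (-(x/(1-q))) ≤ 1 - x := by
  set y := x/(1-q) with hy
  have h1q : (0:ℝ) < 1 - q := by linarith
  have hy0 : 0 < y := div_pos hx0 h1q
  have h1 : y + 1 ≤ Real.exp y := Real.add_one_le_exp y
  have hmul : Real.exp (-y) * Real.exp y = 1 := by
    rw [← Real.exp_add]; simp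
  have hd : y * (1-q) = x := by rw [hy, div_mul_cancel₀ _ (ne_of_gt h1q)]
  have h2 : y*x ≤ y*q := mul_le_mul_of_nonneg_left hxq hy0.le
  have hxy : x * (1+y) ≤ y := by nlinarith [h2, hd]
  have hx1 : x < 1 := lt_of_le_of_lt hxq hq1
  have h3 : (1:ℝ) ≤ (1-x)*(y+1) := by nlinarith [hxy]
  have h4 : (1-x)*(y+1) ≤ (1-x)*Real.exp y := mul_le_mul_of_nonneg_left h1 (by linarith)
  nlinarith [hmul, h3, h4, Real.exp_pos y, Real.exp_pos (-y)]

lemma Pq_lb (q : ℝ) (hq0 : 0 < q) (hq1 : q < 1) (k : ℕ) :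
    Real.exp (-(q/(1-q)^2)) ≤ Pq q k := by
  have h1q : (0:ℝ) < 1 - q := by linarith
  have step : ∀ i ∈ Finset.range k, Real.exp (-(q^(i+1)/(1-q))) ≤ 1 - q^(i+1) := by
    intro i _
    exact factor_lb q hq0 hq1 _ (pow_pos hq0 _)
      (by calc q^(i+1) ≤ q^1 := pow_le_pow_of_le_one hq0.le hq1.le (by omega)
            _ = q := pow_one q)
  have hsum : (∑ i ∈ Finset.range k, q^(i+1)) ≤ q/(1-q) := by
    have he : ∑ i ∈ Finset.range k, q^(i+1) = q * ((q^k - 1)/(q-1)) := by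
      rw [← geom_sum_eq (ne_of_lt hq1), Finset.mul_sum]
      exact Finset.sum_congr rfl fun i _ => by ring
    rw [he]
    have hd : (q^k - 1)/(q-1) = (1-q^k)/(1-q) := by
      rw [div_eq_div_iff (by linarith) (by linarith)]; ring
    rw [hd, ← mul_div_assoc, div_le_div_iff₀ h1q h1q]
    have hk : q^k ≤ 1 := pow_le_one₀ hq0.le hq1.le
    have hk0 : 0 < q^k := pow_pos hq0 k
    nlinarith [mul_pos (mul_pos hq0 h1q) hk0]
  calc Real.exp (-(q/(1-q)^2)) ≤ ∏ i ∈ Finset.range k, Real.exp (-(q^(i+1)/(1-q))) := by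
        rw [← Real.exp_sum]
        apply Real.exp_le_exp.2
        rw [Finset.sum_neg_distrib, ← Finset.sum_div, neg_le_neg_iff,
          div_le_div_iff₀ h1q (by positivity)]
        calc (∑ i ∈ Finset.range k, q^(i+1)) * (1-q)^2
            ≤ (q/(1-q)) * (1-q)^2 := by
              apply mul_le_mul_of_nonneg_right hsum (by positivity)
          _ = q * (1-q) := by field_simp
    _ ≤ Pq q k :=
        Finset.prod_le_prod (fun i _ => (Real.exp_pos _).le) step

noncomputable def Cq (q : ℝ) : ℝ := Real.exp (-(q/(1-q)^2))

noncomputable def Fq (q : ℝ) (n k : ℕ) : ℝ :=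
  (-1:ℝ)^k * q^((k+1)*((k+1)+1)/2) * qB q n (k+1) / (1 - q^(k+1))

noncomputable def Lq (q : ℝ) (k : ℕ) : ℝ :=
  (-1:ℝ)^k * q^((k+1)*((k+1)+1)/2) * (Pq q (k+1))⁻¹ / (1 - q^(k+1))

theorem qzeta_one_alternating_series (q : ℝ) (hq0 : 0 < q) (hq1 : q < 1) :
    ∑' k : ℕ, q ^ (k + 1) / (1 - q ^ (k + 1)) =
      ∑' k : ℕ, (-1 : ℝ) ^ k * q ^ ((k + 1) * (k + 2) / 2) /
        ((1 - q ^ (k + 1)) * ∏ j ∈ Finset.range (k + 1), (1 - q ^ (j + 1))) := by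
  have h1q : (0:ℝ) < 1 - q := by linarith
  have hC0 : 0 < Cq q := Real.exp_pos _
  have hqpow_le : ∀ k : ℕ, q^(k+1) ≤ q := by
    intro k
    calc q^(k+1) ≤ q^1 := pow_le_pow_of_le_one hq0.le hq1.le (by omega)
      _ = q := pow_one q
  have hsum : Summable (fun k : ℕ => q^(k+1)/(1-q^(k+1))) := by
    have hg : Summable (fun k : ℕ => (q/(1-q)) * q^k) :=
      (summable_geometric_of_lt_one hq0.le hq1).mul_left _
    apply Summable.of_nonneg_of_le
      (fun k => div_nonneg (pow_nonneg hq0.le _) (one_sub_pow_pos q hq0 hq1 k).le) _ hg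
    intro k
    have he : (q/(1-q)) * q^k = q^(k+1)/(1-q) := by rw [pow_succ]; ring
    rw [he]
    exact div_le_div₀ (pow_nonneg hq0.le _) le_rfl h1q (by linarith [hqpow_le k])
  have hT1 : Filter.Tendsto (fun n => ∑ k ∈ Finset.range n, q^(k+1)/(1-q^(k+1)))
      Filter.atTop (nhds (∑' k : ℕ, q^(k+1)/(1-q^(k+1)))) := hsum.hasSum.tendsto_sum_nat
  have htse : ∀ n, ∑ k ∈ Finset.range n, Fq q n k = ∑' k, Fq q n k := by
    intro n
    symm
    apply tsum_eq_sum
    intro k hk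
    have hk' : n ≤ k := by simpa using hk
    simp only [Fq]
    rw [qB_eq_zero q n (k+1) (by omega), mul_zero, zero_div]
  have hbd : ∀ n k, |Fq q n k| ≤ q^(k+1) * (Cq q)⁻¹ / (1-q) := by
    intro n k
    obtain ⟨hB0, hBle⟩ := qB_nonneg_le q hq0 hq1 n (k+1)
    have hBC : qB q n (k+1) ≤ (Cq q)⁻¹ :=
      hBle.trans (inv_anti₀ hC0 (Pq_lb q hq0 hq1 (k+1)))
    have hTle : q^((k+1)*((k+1)+1)/2) ≤ q^(k+1) := by
      apply pow_le_pow_of_le_one hq0.le hq1.le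
      rw [Nat.le_div_iff_mul_le (by norm_num : 0 < 2)]
      nlinarith [k.zero_le]
    have habs : |Fq q n k| = q^((k+1)*((k+1)+1)/2) * qB q n (k+1) / (1 - q^(k+1)) := by
      simp only [Fq]
      rw [abs_div, abs_mul, abs_mul, abs_pow, abs_neg, abs_one, one_pow, one_mul,
        abs_of_nonneg (pow_nonneg hq0.le _), abs_of_nonneg hB0,
        abs_of_pos (one_sub_pow_pos q hq0 hq1 k)]
    rw [habs]
    exact div_le_div₀ (by positivity)
      (mul_le_mul hTle hBC hB0 (pow_nonneg hq0.le _)) h1q (by linarith [hqpow_le k])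
  have hsb : Summable (fun k : ℕ => q^(k+1) * (Cq q)⁻¹ / (1-q)) := by
    have he : (fun k : ℕ => q^(k+1) * (Cq q)⁻¹/(1-q)) = fun k => (q * (Cq q)⁻¹/(1-q)) * q^k := by
      funext k; rw [pow_succ]; ring
    rw [he]
    exact (summable_geometric_of_lt_one hq0.le hq1).mul_left _
  have hpt : ∀ k, Filter.Tendsto (fun n => Fq q n k) Filter.atTop (nhds (Lq q k)) := by
    intro k
    simp only [Fq, Lq]
    exact ((qB_tendsto q hq0 hq1 (k+1)).const_mul
      ((-1:ℝ)^k * q^((k+1)*((k+1)+1)/2))).div_const (1 - q^(k+1))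
  have hT2 : Filter.Tendsto (fun n => ∑' k, Fq q n k) Filter.atTop (nhds (∑' k, Lq q k)) := by
    apply tendsto_tsum_of_dominated_convergence hsb hpt
    apply Filter.Eventually.of_forall
    intro n k
    rw [Real.norm_eq_abs]
    exact hbd n k
  have heq : (fun n => ∑ k ∈ Finset.range n, q^(k+1)/(1-q^(k+1)))
      = fun n => ∑' k, Fq q n k := by
    funext n
    rw [vanHamme q hq0 hq1 n, ← htse n]
    exact Finset.sum_congr rfl fun k _ => by simp only [Fq]
  rw [heq] at hT1
  have hmain : (∑' k : ℕ, q^(k+1)/(1-q^(k+1))) = ∑' k, Lq q k :=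
    tendsto_nhds_unique hT1 hT2
  rw [hmain]
  apply tsum_congr
  intro k
  simp only [Lq, Pq]
  rw [show (k+1)*((k+1)+1)/2 = (k+1)*(k+2)/2 from by rw [show k+1+1 = k+2 by omega]]
  rw [← div_eq_mul_inv, div_div,
    mul_comm (∏ i ∈ Finset.range (k+1), (1 - q^(i+1))) (1 - q^(k+1))]
end
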